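/- arXiv:1205.1166 — 2 statements merged into one kernel-verified Lean document; each statement's English description precedes it below -/
import Mathlib

section
/- Under assumptions (A5) and (A7): if a couple (x, x̄) of bounded continuous functions is proximal (for every ε > 0 and E > 0 there exist infinitely many disjoint intervals of length at least E on which ‖x(t) − x̄(t)‖ < ε), then the couple (φ_x, φ_{x̄}) of corresponding bounded solutions of the replicator equation is also proximal. -/
open MeasureTheory Set Filter

abbrev Eu (k : ℕ) := EuclideanSpace ℝ (Fin k)

noncomputable def eAt {n : ℕ} (A : Matrix (Fin n) (Fin n) ℝ) (t : ℝ) :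
    Eu n →L[ℝ] Eu n :=
  Matrix.toEuclideanCLM (𝕜 := ℝ) (NormedSpace.exp (t • A))

noncomputable def mulA {n : ℕ} (A : Matrix (Fin n) (Fin n) ℝ) : Eu n →L[ℝ] Eu n :=
  Matrix.toEuclideanCLM (𝕜 := ℝ) A

/-- A pair of functions is proximal if for all ε > 0, E > 0 there are infinitely
many disjoint intervals of length ≥ E on which the functions are ε-close. -/
def Proximal {k : ℕ} (ψ ψb : ℝ → Eu k) : Prop :=
  ∀ ε > (0:ℝ), ∀ E > (0:ℝ), ∃ a l : ℕ → ℝ,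
    (∀ i, E ≤ l i) ∧
    (Pairwise fun i j => Disjoint (Icc (a i) (a i + l i)) (Icc (a j) (a j + l j))) ∧
    ∀ i, ∀ t ∈ Icc (a i) (a i + l i), ‖ψ t - ψb t‖ < ε

/-! ### Auxiliary lemmas -/

section ExpIntegrals

lemma expIic_indicator_eq {ω : ℝ} (hω : 0 < ω) (u : ℝ) :
    (Iic u).indicator (fun s => Real.exp (ω * s))
      = fun s => ((Iic (ω * u)).indicator Real.exp) (ω * s) := by
  ext s
  by_cases h : s ≤ u
  · simp [indicator, h, mul_le_mul_of_nonneg_left h hω.le]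
  · have h2 : ¬ ω * s ≤ ω * u := fun hc => h (le_of_mul_le_mul_left hc hω)
    simp [indicator, h, h2]

lemma expIic_int {ω : ℝ} (hω : 0 < ω) (u : ℝ) :
    IntegrableOn (fun s => Real.exp (ω * s)) (Iic u) := by
  rw [← integrable_indicator_iff measurableSet_Iic, expIic_indicator_eq hω]
  exact (MeasureTheory.integrable_comp_mul_left_iff _ hω.ne').2
    ((integrable_indicator_iff measurableSet_Iic).2 (integrableOn_exp_Iic _))

lemma expIic_val {ω : ℝ} (hω : 0 < ω) (u : ℝ) :
    ∫ s in Iic u, Real.exp (ω * s) = Real.exp (ω * u) / ω := by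
  rw [← integral_indicator measurableSet_Iic, expIic_indicator_eq hω,
    MeasureTheory.Measure.integral_comp_mul_left ((Iic (ω * u)).indicator Real.exp) ω,
    integral_indicator measurableSet_Iic, integral_exp_Iic]
  rw [abs_of_pos (inv_pos.2 hω), smul_eq_mul]
  ring

lemma bound_fun_eq {ω : ℝ} (t C : ℝ) :
    (fun s : ℝ => Real.exp (-(ω * (t - s))) * C)
      = fun s => Real.exp (ω * s) * (Real.exp (-(ω * t)) * C) := by
  funext s
  rw [show -(ω * (t - s)) = ω * s + -(ω * t) by ring, Real.exp_add]
  ring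

lemma bound_int_int {ω : ℝ} (hω : 0 < ω) (t u C : ℝ) :
    IntegrableOn (fun s : ℝ => Real.exp (-(ω * (t - s))) * C) (Iic u) := by
  rw [bound_fun_eq]
  exact (expIic_int hω u).mul_const _

lemma bound_int_val {ω : ℝ} (hω : 0 < ω) (t u C : ℝ) :
    ∫ s in Iic u, Real.exp (-(ω * (t - s))) * C
      = Real.exp (-(ω * (t - u))) / ω * C := by
  rw [bound_fun_eq, MeasureTheory.integral_mul_const, expIic_val hω,
    show -(ω * (t - u)) = ω * u + -(ω * t) by ring, Real.exp_add]
  ring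

end ExpIntegrals

section EAt

variable {n : ℕ} (A : Matrix (Fin n) (Fin n) ℝ)

lemma eAt_add (u v : ℝ) : eAt A (u + v) = (eAt A u) * (eAt A v) := by
  unfold eAt
  rw [← map_mul, ← Matrix.exp_add_of_commute, add_smul]
  exact (Commute.refl A).smul_left u |>.smul_right v

lemma eAt_zero' : eAt A 0 = 1 := by
  unfold eAt
  rw [zero_smul, NormedSpace.exp_zero, map_one]

lemma eAt_cancel (u : ℝ) (w : Eu n) : eAt A (-u) (eAt A u w) = w := by
  have h2 : (eAt A (-u)) * (eAt A u) = 1 := by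
    rw [← eAt_add]; simp [eAt_zero']
  calc eAt A (-u) (eAt A u w) = ((eAt A (-u)) * (eAt A u)) w := rfl
    _ = w := by rw [h2]; rfl

section
attribute [local instance] Matrix.linftyOpNormedRing Matrix.linftyOpNormedAlgebra

lemma eAt_cont : Continuous (fun t => eAt A t) := by
  have h1 : Continuous (fun t : ℝ => NormedSpace.exp (t • A)) :=
    NormedSpace.exp_continuous.comp (continuous_id.smul continuous_const)
  let lin : (Matrix (Fin n) (Fin n) ℝ) →ₗ[ℝ] (Eu n →L[ℝ] Eu n) :=
    { toFun := fun M => Matrix.toEuclideanCLM (𝕜 := ℝ) M,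
      map_add' := fun a b => map_add _ a b,
      map_smul' := fun c a => map_smul _ c a }
  have h2 : Continuous lin := lin.continuous_of_finiteDimensional
  exact h2.comp h1

end

lemma eAt_apply_cont (f : ℝ → ℝ) (hf : Continuous f) :
    Continuous (fun p : ℝ × Eu n => eAt A (f p.1) p.2) := by
  have h1 : Continuous fun p : ℝ × Eu n => ((eAt A (f p.1), p.2) :
      (Eu n →L[ℝ] Eu n) × Eu n) :=
    (((eAt_cont A).comp (hf.comp continuous_fst))).prodMk continuous_snd
  exact isBoundedBilinearMap_apply.continuous.comp h1

lemma aesm_integrand_iff (t : ℝ) (μ : Measure ℝ) (h : ℝ → Eu n) :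
    AEStronglyMeasurable (fun s => eAt A (t - s) (h s)) μ
      ↔ AEStronglyMeasurable h μ := by
  constructor
  · intro hF
    have h1 : AEStronglyMeasurable (fun s : ℝ => (s, eAt A (t - s) (h s))) μ :=
      aestronglyMeasurable_id.prodMk hF
    have h2 := (eAt_apply_cont A (fun u => u - t)
      (continuous_id.sub continuous_const)).comp_aestronglyMeasurable h1
    refine h2.congr (Filter.Eventually.of_forall fun s => ?_)
    have h3 := eAt_cancel A (t - s) (h s)
    rw [neg_sub] at h3
    exact h3
  · intro hh
    have h1 : AEStronglyMeasurable (fun s : ℝ => (s, h s)) μ :=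
      aestronglyMeasurable_id.prodMk hh
    have h2 := (eAt_apply_cont A (fun u => t - u)
      (continuous_const.sub continuous_id)).comp_aestronglyMeasurable h1
    exact h2

lemma meas_aux {m : ℕ}
    (g : Eu m → Eu n → Eu n) (hgc : Continuous fun p : Eu m × Eu n => g p.1 p.2)
    (x : ℝ → Eu m) (hxc : Continuous x) (y : ℝ → Eu n)
    (hy : ∀ t, y t = ∫ s in Iic t, eAt A (t - s) (g (x s) (y s))) :
    AEStronglyMeasurable (fun s => g (x s) (y s)) (volume : Measure ℝ) := by
  set h : ℝ → Eu n := fun s => g (x s) (y s) with hh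
  set G : Set ℝ := {t | AEStronglyMeasurable h (volume.restrict (Iic t))} with hG
  have Gdc : ∀ {t t' : ℝ}, t' ≤ t → t ∈ G → t' ∈ G := by
    intro t t' htt ht
    exact ht.mono_measure (Measure.restrict_mono (Iic_subset_Iic.mpr htt) le_rfl)
  have hy0 : ∀ t, t ∉ G → y t = 0 := by
    intro t ht
    rw [hy t]
    apply integral_undef
    intro hint
    exact ht ((aesm_integrand_iff A t _ h).1 hint.aestronglyMeasurable)
  have hcont0 : Continuous (fun s : ℝ => g (x s) (0 : Eu n)) :=
    hgc.comp (hxc.prodMk continuous_const)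
  by_cases hne : G.Nonempty
  · by_cases hall : ∀ t : ℝ, t ∈ G
    · have hU : (⋃ k : ℕ, Iic (k : ℝ)) = univ := by
        ext s; simp only [mem_iUnion, mem_Iic, mem_univ, iff_true]
        obtain ⟨k, hk⟩ := exists_nat_ge s
        exact ⟨k, hk⟩
      have : AEStronglyMeasurable h (volume.restrict (⋃ k : ℕ, Iic (k : ℝ))) :=
        aestronglyMeasurable_iUnion_iff.2 fun k => hall k
      rwa [hU, Measure.restrict_univ] at this
    · push_neg at hall
      obtain ⟨t₀, ht₀⟩ := hall
      have bdd : BddAbove G := by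
        refine ⟨t₀, fun t ht => ?_⟩
        by_contra hc
        exact ht₀ (Gdc (le_of_not_ge hc) ht)
      set c := sSup G with hc
      have hlt : ∀ t' < c, t' ∈ G := by
        intro t' h'
        obtain ⟨u, hu, h2⟩ := exists_lt_of_lt_csSup hne h'
        exact Gdc h2.le hu
      have hgt : ∀ t > c, t ∉ G := fun t ht hmem =>
        absurd (le_csSup bdd hmem) (not_le.2 ht)
      have hyz : ∀ s > c, y s = 0 := fun s hs => hy0 s (hgt s hs)
      have hIio : AEStronglyMeasurable h (volume.restrict (Iio c)) := by
        have hU : (⋃ k : ℕ, Iic (c - 1 / ((k : ℝ) + 1))) = Iio c := by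
          ext s
          simp only [mem_iUnion, mem_Iic, mem_Iio]
          constructor
          · rintro ⟨k, hk⟩
            have : (0:ℝ) < 1 / ((k : ℝ) + 1) := by positivity
            linarith
          · intro hs
            obtain ⟨k, hk⟩ := exists_nat_one_div_lt (sub_pos.2 hs)
            exact ⟨k, by linarith⟩
        rw [← hU]
        refine aestronglyMeasurable_iUnion_iff.2 fun k => hlt _ ?_
        have : (0:ℝ) < 1 / ((k : ℝ) + 1) := by positivity
        linarith
      have hIci : AEStronglyMeasurable h (volume.restrict (Ici c)) := by
        refine hcont0.aestronglyMeasurable.congr ?_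
        have hnec : ∀ᵐ s ∂(volume.restrict (Ici c)), s ≠ c := by
          refine ae_restrict_of_ae ?_
          have hv : volume ({c} : Set ℝ) = 0 := Real.volume_singleton
          rw [ae_iff]
          convert hv using 2
          ext s; simp
        have hmem : ∀ᵐ s ∂(volume.restrict (Ici c)), s ∈ Ici c :=
          ae_restrict_mem measurableSet_Ici
        filter_upwards [hnec, hmem] with s hs1 hs2
        have hz : y s = 0 := hyz s (lt_of_le_of_ne hs2 (Ne.symm hs1))
        simp [hh, hz]
      have hcomb : AEStronglyMeasurable h (volume.restrict (Iio c ∪ Ici c)) :=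
        aestronglyMeasurable_union_iff.2 ⟨hIio, hIci⟩
      rw [Iio_union_Ici, Measure.restrict_univ] at hcomb
      exact hcomb
  · have hz : ∀ t, y t = 0 := fun t => hy0 t (fun hmem => hne ⟨t, hmem⟩)
    have heq : h = fun s => g (x s) 0 := by funext s; rw [hh]; simp [hz s]
    rw [heq]
    exact hcont0.aestronglyMeasurable

lemma integrand_integrable {N ω M₀ : ℝ} (hN : 0 < N) (hω : 0 < ω)
    (hA : ∀ t : ℝ, 0 ≤ t → ‖eAt A t‖ ≤ N * Real.exp (-ω * t))
    (h : ℝ → Eu n) (hmeas : AEStronglyMeasurable h (volume : Measure ℝ))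
    (hbd : ∀ s, ‖h s‖ ≤ M₀) (t : ℝ) :
    IntegrableOn (fun s => eAt A (t - s) (h s)) (Iic t) := by
  have hsm : AEStronglyMeasurable (fun s => eAt A (t - s) (h s))
      (volume.restrict (Iic t)) :=
    (aesm_integrand_iff A t _ h).2 hmeas.restrict
  refine Integrable.mono' (bound_int_int hω t t (N * M₀)) hsm ?_
  filter_upwards [ae_restrict_mem measurableSet_Iic] with s hs
  have h0 : (0:ℝ) ≤ t - s := sub_nonneg.2 hs
  calc ‖eAt A (t - s) (h s)‖ ≤ ‖eAt A (t - s)‖ * ‖h s‖ :=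
        ContinuousLinearMap.le_opNorm _ _
    _ ≤ (N * Real.exp (-ω * (t - s))) * M₀ := by
        refine mul_le_mul (hA _ h0) (hbd s) (norm_nonneg _) ?_
        positivity
    _ = Real.exp (-(ω * (t - s))) * (N * M₀) := by rw [neg_mul]; ring

end EAt

/-- Proximality of (x, x̄) implies proximality of (φₓ, φ\_x̄). -/
theorem stmt11 {m n : ℕ} (A : Matrix (Fin n) (Fin n) ℝ) (N ω M₀ L₂ L₃ : ℝ)
    (hN : 0 < N) (hω : 0 < ω) (hM₀ : 0 < M₀) (hL₂ : 0 < L₂) (hL₃ : 0 < L₃)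
    (hA : ∀ t : ℝ, 0 ≤ t → ‖eAt A t‖ ≤ N * Real.exp (-ω * t))
    (g : Eu m → Eu n → Eu n)
    (hgc : Continuous fun p : Eu m × Eu n => g p.1 p.2)
    (hgb : ∀ x y, ‖g x y‖ ≤ M₀)
    (hg₂ : ∀ x₁ x₂ y, ‖g x₁ y - g x₂ y‖ ≤ L₂ * ‖x₁ - x₂‖)
    (hg₃ : ∀ x y₁ y₂, ‖g x y₁ - g x y₂‖ ≤ L₃ * ‖y₁ - y₂‖)
    (hcond : N * L₃ - ω < 0)
    (x xb : ℝ → Eu m) (hxc : Continuous x) (hxbc : Continuous xb)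
    (hxB : ∃ H, ∀ t, ‖x t‖ ≤ H) (hxbB : ∃ H, ∀ t, ‖xb t‖ ≤ H)
    (y yb : ℝ → Eu n)
    (hyB : ∃ B, ∀ t, ‖y t‖ ≤ B) (hybB : ∃ B, ∀ t, ‖yb t‖ ≤ B)
    (hy : ∀ t, y t = ∫ s in Iic t, eAt A (t - s) (g (x s) (y s)))
    (hyb : ∀ t, yb t = ∫ s in Iic t, eAt A (t - s) (g (xb s) (yb s)))
    (hprox : Proximal x xb) :
    Proximal y yb := by
  obtain ⟨B, hB⟩ := hyB
  obtain ⟨Bb, hBb⟩ := hybB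
  set K : ℝ := B + Bb with hKdef
  have hB0 : 0 ≤ B := le_trans (norm_nonneg (y 0)) (hB 0)
  have hBb0 : 0 ≤ Bb := le_trans (norm_nonneg (yb 0)) (hBb 0)
  have hK : 0 ≤ K := by positivity
  set θ : ℝ := N * L₃ / ω with hθdef
  have hθ0 : 0 < θ := by positivity
  have hθ1 : θ < 1 := (div_lt_one hω).2 (by linarith)
  have h1θ : 0 < 1 - θ := by linarith
  set h : ℝ → Eu n := fun s => g (x s) (y s) with hhdef
  set hb : ℝ → Eu n := fun s => g (xb s) (yb s) with hhbdef
  have hmeas : AEStronglyMeasurable h (volume : Measure ℝ) :=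
    meas_aux A g hgc x hxc y hy
  have hmeasb : AEStronglyMeasurable hb (volume : Measure ℝ) :=
    meas_aux A g hgc xb hxbc yb hyb
  have hInt : ∀ t, IntegrableOn (fun s => eAt A (t - s) (h s)) (Iic t) :=
    integrand_integrable A hN hω hA h hmeas (fun s => hgb _ _)
  have hIntb : ∀ t, IntegrableOn (fun s => eAt A (t - s) (hb s)) (Iic t) :=
    integrand_integrable A hN hω hA hb hmeasb (fun s => hgb _ _)
  -- the central iterated estimate
  have main : ∀ (δ T : ℝ), 0 ≤ δ → 0 ≤ T → ∀ (a l : ℝ),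
      (∀ s ∈ Icc a (a + l), ‖x s - xb s‖ ≤ δ) →
      ∀ (k : ℕ), ∀ t, t ∈ Icc a (a + l) → a + k * T ≤ t →
      ‖y t - yb t‖ ≤
        (N * 2 * M₀ / ω * Real.exp (-(ω * T)) + N * L₂ * δ / ω) / (1 - θ)
          + θ ^ k * K := by
    intro δ T hδ hT a l hclose k
    set c : ℝ := N * 2 * M₀ / ω * Real.exp (-(ω * T)) + N * L₂ * δ / ω with hcdef
    have hc0 : 0 ≤ c := by positivity
    induction k with
    | zero =>
      intro t ht htk
      have h1 : ‖y t - yb t‖ ≤ K := by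
        calc ‖y t - yb t‖ ≤ ‖y t‖ + ‖yb t‖ := norm_sub_le _ _
          _ ≤ K := add_le_add (hB t) (hBb t)
      have h2 : 0 ≤ c / (1 - θ) := by positivity
      simpa using by linarith [h1, h2]
    | succ k ih =>
      intro t ht htk
      set P : ℝ := c / (1 - θ) + θ ^ k * K with hPdef
      have hP0 : 0 ≤ P := by positivity
      have hkT : a + k * T ≤ t - T := by
        have : (k : ℝ) * T + T = ((k : ℕ) + 1 : ℝ) * T := by ring
        push_cast at htk ⊢
        linarith
      have hts : t - T ≤ t := sub_le_self t hT
      set F : ℝ → Eu n := fun s => eAt A (t - s) (h s) - eAt A (t - s) (hb s)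
        with hFdef
      have hFint : IntegrableOn F (Iic t) := (hInt t).sub (hIntb t)
      have hdiff : y t - yb t = ∫ s in Iic t, F s := by
        rw [hy t, hyb t, ← integral_sub (hInt t) (hIntb t)]
      have hnorm : ‖y t - yb t‖ ≤ ∫ s in Iic t, ‖F s‖ := by
        rw [hdiff]; exact norm_integral_le_integral_norm _
      have hFpt : ∀ s, s ≤ t → ‖F s‖ ≤
          (N * Real.exp (-ω * (t - s))) * ‖h s - hb s‖ := by
        intro s hs
        have h0 : (0:ℝ) ≤ t - s := sub_nonneg.2 hs
        have hmap : F s = eAt A (t - s) (h s - hb s) := by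
          rw [hFdef]; simp [map_sub]
        rw [hmap]
        calc ‖eAt A (t - s) (h s - hb s)‖
            ≤ ‖eAt A (t - s)‖ * ‖h s - hb s‖ := ContinuousLinearMap.le_opNorm _ _
          _ ≤ (N * Real.exp (-ω * (t - s))) * ‖h s - hb s‖ :=
              mul_le_mul_of_nonneg_right (hA _ h0) (norm_nonneg _)
      -- split the integral
      have hsub1 : Iic (t - T) ⊆ Iic t := Iic_subset_Iic.2 hts
      have hsub2 : Ioc (t - T) t ⊆ Iic t := Ioc_subset_Iic_self
      have hsplit : ∫ s in Iic t, ‖F s‖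
          = (∫ s in Iic (t - T), ‖F s‖) + ∫ s in Ioc (t - T) t, ‖F s‖ := by
        rw [← setIntegral_union (Iic_disjoint_Ioc le_rfl) measurableSet_Ioc
          ((hFint.mono_set hsub1).norm) ((hFint.mono_set hsub2).norm),
          Iic_union_Ioc_eq_Iic hts]
      -- far past bound
      have hbound1 : ∫ s in Iic (t - T), ‖F s‖
          ≤ ∫ s in Iic (t - T), Real.exp (-(ω * (t - s))) * (N * (2 * M₀)) := by
        refine setIntegral_mono_on ((hFint.mono_set hsub1).norm)
          (bound_int_int hω t (t - T) _) measurableSet_Iic ?_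
        intro s hs
        have hs' : s ≤ t := le_trans hs hts
        calc ‖F s‖ ≤ (N * Real.exp (-ω * (t - s))) * ‖h s - hb s‖ := hFpt s hs'
          _ ≤ (N * Real.exp (-ω * (t - s))) * (2 * M₀) := by
              refine mul_le_mul_of_nonneg_left ?_ (by positivity)
              calc ‖h s - hb s‖ ≤ ‖h s‖ + ‖hb s‖ := norm_sub_le _ _
                _ ≤ 2 * M₀ := by
                    have := hgb (x s) (y s); have := hgb (xb s) (yb s)
                    simp only [hhdef, hhbdef]; linarith
          _ = Real.exp (-(ω * (t - s))) * (N * (2 * M₀)) := by rw [neg_mul]; ring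
      have hval1 : ∫ s in Iic (t - T), Real.exp (-(ω * (t - s))) * (N * (2 * M₀))
          = Real.exp (-(ω * T)) / ω * (N * (2 * M₀)) := by
        rw [bound_int_val hω, show t - (t - T) = T by ring]
      -- recent past bound
      have hClose : ∀ s, s ∈ Ioc (t - T) t → ‖h s - hb s‖ ≤ L₂ * δ + L₃ * P := by
        intro s hs
        have hsa : a ≤ s := by
          have h1 : a + (k : ℝ) * T ≤ t - T := hkT
          have h2 : 0 ≤ (k : ℝ) * T := by positivity
          linarith [hs.1]
        have hsl : s ≤ a + l := le_trans hs.2 ht.2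
        have hsk : a + (k : ℝ) * T ≤ s := le_trans hkT hs.1.le
        have hx' : ‖x s - xb s‖ ≤ δ := hclose s ⟨hsa, hsl⟩
        have hy' : ‖y s - yb s‖ ≤ P := ih s ⟨hsa, hsl⟩ hsk
        have hdec : h s - hb s
            = (g (x s) (y s) - g (xb s) (y s)) + (g (xb s) (y s) - g (xb s) (yb s)) := by
          simp [hhdef, hhbdef]
        rw [hdec]
        calc ‖(g (x s) (y s) - g (xb s) (y s)) + (g (xb s) (y s) - g (xb s) (yb s))‖
            ≤ ‖g (x s) (y s) - g (xb s) (y s)‖ + ‖g (xb s) (y s) - g (xb s) (yb s)‖ :=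
              norm_add_le _ _
          _ ≤ L₂ * ‖x s - xb s‖ + L₃ * ‖y s - yb s‖ :=
              add_le_add (hg₂ _ _ _) (hg₃ _ _ _)
          _ ≤ L₂ * δ + L₃ * P :=
              add_le_add (mul_le_mul_of_nonneg_left hx' hL₂.le)
                (mul_le_mul_of_nonneg_left hy' hL₃.le)
      have hC₂ : (0:ℝ) ≤ L₂ * δ + L₃ * P := by positivity
      have hbound2 : ∫ s in Ioc (t - T) t, ‖F s‖
          ≤ ∫ s in Ioc (t - T) t,
              Real.exp (-(ω * (t - s))) * (N * (L₂ * δ + L₃ * P)) := by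
        refine setIntegral_mono_on ((hFint.mono_set hsub2).norm)
          ((bound_int_int hω t t _).mono_set hsub2) measurableSet_Ioc ?_
        intro s hs
        calc ‖F s‖ ≤ (N * Real.exp (-ω * (t - s))) * ‖h s - hb s‖ := hFpt s hs.2
          _ ≤ (N * Real.exp (-ω * (t - s))) * (L₂ * δ + L₃ * P) :=
              mul_le_mul_of_nonneg_left (hClose s hs) (by positivity)
          _ = Real.exp (-(ω * (t - s))) * (N * (L₂ * δ + L₃ * P)) := by
              rw [neg_mul]; ring
      have hval2 : ∫ s in Ioc (t - T) t,
            Real.exp (-(ω * (t - s))) * (N * (L₂ * δ + L₃ * P))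
          ≤ (N * (L₂ * δ + L₃ * P)) / ω := by
        have hmono : ∫ s in Ioc (t - T) t,
              Real.exp (-(ω * (t - s))) * (N * (L₂ * δ + L₃ * P))
            ≤ ∫ s in Iic t,
              Real.exp (-(ω * (t - s))) * (N * (L₂ * δ + L₃ * P)) := by
          refine setIntegral_mono_set (bound_int_int hω t t _) ?_
            (HasSubset.Subset.eventuallyLE hsub2)
          refine Filter.Eventually.of_forall fun s => ?_
          positivity
        have hval : ∫ s in Iic t,
              Real.exp (-(ω * (t - s))) * (N * (L₂ * δ + L₃ * P))
            = Real.exp (-(ω * (t - t))) / ω * (N * (L₂ * δ + L₃ * P)) :=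
          bound_int_val hω t t _
        rw [hval, show t - t = 0 by ring] at hmono
        refine le_trans hmono (le_of_eq ?_)
        rw [mul_zero, neg_zero, Real.exp_zero]
        ring
      -- combine
      have htotal : ‖y t - yb t‖ ≤ c + θ * P := by
        have e1 : Real.exp (-(ω * T)) / ω * (N * (2 * M₀))
            = N * 2 * M₀ / ω * Real.exp (-(ω * T)) := by ring
        have e2 : (N * (L₂ * δ + L₃ * P)) / ω = N * L₂ * δ / ω + θ * P := by
          rw [hθdef]; ring
        calc ‖y t - yb t‖ ≤ ∫ s in Iic t, ‖F s‖ := hnorm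
          _ = (∫ s in Iic (t - T), ‖F s‖) + ∫ s in Ioc (t - T) t, ‖F s‖ := hsplit
          _ ≤ Real.exp (-(ω * T)) / ω * (N * (2 * M₀))
              + (N * (L₂ * δ + L₃ * P)) / ω := by
            refine add_le_add (le_trans hbound1 (le_of_eq hval1))
              (le_trans hbound2 hval2)
          _ = c + θ * P := by rw [hcdef, e1, e2]; ring
      have halg : c + θ * P = c / (1 - θ) + θ ^ (k + 1) * K := by
        rw [hPdef, pow_succ]
        field_simp
        ring
      rw [← halg]
      exact htotal
  -- final assembly
  intro ε hε E hE
  set ε' : ℝ := ε * (1 - θ) / 3 with hε'def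
  have hε' : 0 < ε' := by positivity
  -- choose T
  have htendT : Tendsto (fun T : ℝ => N * 2 * M₀ / ω * Real.exp (-(ω * T)))
      atTop (nhds 0) := by
    have h1 : Tendsto (fun T : ℝ => ω * T) atTop atTop :=
      Tendsto.const_mul_atTop hω tendsto_id
    have h2 : Tendsto (fun T : ℝ => Real.exp (-(ω * T))) atTop (nhds 0) :=
      Real.tendsto_exp_neg_atTop_nhds_zero.comp h1
    have h3 := h2.const_mul (N * 2 * M₀ / ω)
    simpa using h3
  obtain ⟨T, hTbig, hT0⟩ :=
    ((htendT.eventually_lt_const hε').and (eventually_ge_atTop 0)).exists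
  -- choose k
  have htendk : Tendsto (fun k : ℕ => θ ^ k * K) atTop (nhds 0) := by
    have h1 := tendsto_pow_atTop_nhds_zero_of_lt_one hθ0.le hθ1
    have h2 := h1.mul_const K
    simpa using h2
  obtain ⟨k, hk⟩ := (htendk.eventually_lt_const (by positivity : (0:ℝ) < ε / 3)).exists
  -- choose δ
  set δ : ℝ := ε' * ω / (N * L₂) / 2 with hδdef
  have hδ0 : 0 < δ := by positivity
  have hδsmall : N * L₂ * δ / ω < ε' := by
    have heq : N * L₂ * δ / ω = ε' / 2 := by
      rw [hδdef]
      field_simp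
    rw [heq]
    linarith
  -- apply proximality of x
  obtain ⟨a, l, hl, hdisj, hclose⟩ := hprox δ hδ0 (E + k * T)
    (by positivity)
  refine ⟨fun i => a i + k * T, fun i => l i - k * T, ?_, ?_, ?_⟩
  · intro i
    have h1 := hl i
    show (E:ℝ) ≤ l i - k * T
    linarith
  · have hsub : ∀ i, Icc (a i + k * T) (a i + k * T + (l i - k * T))
        ⊆ Icc (a i) (a i + l i) := by
      intro i
      refine Icc_subset_Icc ?_ ?_
      · have : (0:ℝ) ≤ k * T := by positivity
        linarith
      · apply le_of_eq; ring
    intro i j hij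
    exact (hdisj hij).mono (hsub i) (hsub j)
  · intro i t ht
    have hsub : Icc (a i + k * T) (a i + k * T + (l i - k * T))
        ⊆ Icc (a i) (a i + l i) := by
      refine Icc_subset_Icc ?_ ?_
      · have : (0:ℝ) ≤ k * T := by positivity
        linarith
      · apply le_of_eq; ring
    have ht' : t ∈ Icc (a i) (a i + l i) := hsub ht
    have hbnd := main δ T hδ0.le hT0 (a i) (l i)
      (fun s hs => (hclose i s hs).le) k t ht' ht.1
    have hcT : N * 2 * M₀ / ω * Real.exp (-(ω * T)) + N * L₂ * δ / ω < 2 * ε' := by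
      linarith
    have hfrac : (N * 2 * M₀ / ω * Real.exp (-(ω * T)) + N * L₂ * δ / ω) / (1 - θ)
        < 2 * ε' / (1 - θ) := by
      exact (div_lt_div_iff_of_pos_right h1θ).2 hcT
    have heq : 2 * ε' / (1 - θ) = 2 * ε / 3 := by
      rw [hε'def]
      field_simp
    rw [heq] at hfrac
    calc ‖y t - yb t‖
        ≤ (N * 2 * M₀ / ω * Real.exp (-(ω * T)) + N * L₂ * δ / ω) / (1 - θ)
          + θ ^ k * K := hbnd
      _ < ε := by linarith
end

section
/- Under assumptions (A5) and (A7): suppose a periodic solution x_p ∈ 𝒜_x is stabilized in the sense that for a given solution x of x' = F(t,x) there exist a ∈ ℝ and E > 0 with ‖x(t) − x_p(t)‖ < ε for all t ∈ [a, a+E]. Let y be any solution of y' = Ay + g(x(t), y) and y_p = φ_{x_p} the bounded periodic solution corresponding to x_p. Then for all t ∈ [a, a+E], ‖y(t) − y_p(t)‖ < N‖y(a) − y_p(a)‖ e^{(N L₃ − ω)(t−a)} + N L₂ ε / (ω − N L₃). In particular, if E > (1/(ω − N L₃)) ln(N‖y(a) − y_p(a)‖/ε), then there exists b ∈ [a,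 a+E] such that ‖y(t) − y_p(t)‖ < (1 + N L₂/(ω − N L₃)) ε for all t ∈ [b, a+E]. -/
open MeasureTheory Set Filter

lemma eAt_eq {n : ℕ} (A : Matrix (Fin n) (Fin n) ℝ) (t : ℝ) :
    eAt A t = NormedSpace.exp (t • mulA A) := by
  letI : SeminormedRing (Matrix (Fin n) (Fin n) ℝ) := Matrix.linftyOpSemiNormedRing
  letI : NormedRing (Matrix (Fin n) (Fin n) ℝ) := Matrix.linftyOpNormedRing
  letI : NormedAlgebra ℝ (Matrix (Fin n) (Fin n) ℝ) := Matrix.linftyOpNormedAlgebra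
  have hf : Continuous (Matrix.toEuclideanCLM (𝕜 := ℝ) (n := Fin n)) := by
    have : Continuous ((Matrix.toEuclideanCLM (𝕜 := ℝ) (n := Fin n) :
        Matrix (Fin n) (Fin n) ℝ →ₗ[ℝ] (Eu n →L[ℝ] Eu n)) : _ → _) :=
      LinearMap.continuous_of_finiteDimensional _
    exact this
  have key := NormedSpace.map_exp_of_mem_ball (𝕂 := ℝ) _ hf (t • A)
    ((NormedSpace.expSeries_radius_eq_top ℝ (Matrix (Fin n) (Fin n) ℝ)).symm ▸ edist_lt_top _ _)
  rw [eAt, mulA, ← _root_.map_smul]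
  exact key

lemma exp_comp_hasDerivAt (c a T : ℝ) :
    HasDerivAt (fun t => Real.exp (c * (t - a))) (c * Real.exp (c * (T - a))) T := by
  have h1 : HasDerivAt (fun t : ℝ => c * (t - a)) c T := by
    simpa using ((hasDerivAt_id T).sub_const a).const_mul c
  simpa [mul_comm] using h1.exp

set_option maxHeartbeats 1000000 in
/-- Control of the replicator: if the generator solution x stays ε-close to the
periodic solution x_p on [a, a+E], then y stays close to y_p = φ\_{x_p}. -/
theorem stmt16 {m n : ℕ} (A : Matrix (Fin n) (Fin n) ℝ) (N ω L₂ L₃ ε a E : ℝ)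
    (hN : 0 < N) (hω : 0 < ω) (hL₂ : 0 < L₂) (hL₃ : 0 < L₃)
    (hε : 0 < ε) (hE : 0 < E)
    (hA : ∀ t : ℝ, 0 ≤ t → ‖eAt A t‖ ≤ N * Real.exp (-ω * t))
    (g : Eu m → Eu n → Eu n)
    (hgc : Continuous fun p : Eu m × Eu n => g p.1 p.2)
    (hg₂ : ∀ x₁ x₂ y, ‖g x₁ y - g x₂ y‖ ≤ L₂ * ‖x₁ - x₂‖)
    (hg₃ : ∀ x y₁ y₂, ‖g x y₁ - g x y₂‖ ≤ L₃ * ‖y₁ - y₂‖)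
    (hcond : N * L₃ - ω < 0)
    (F : ℝ → Eu m → Eu m)
    (x xp : ℝ → Eu m)
    (hx : ∀ t, HasDerivAt x (F t (x t)) t)
    (hxp : ∀ t, HasDerivAt xp (F t (xp t)) t)
    (hxpper : ∃ p > (0:ℝ), ∀ t, xp (t + p) = xp t)
    (hclose : ∀ t ∈ Icc a (a + E), ‖x t - xp t‖ < ε)
    (y yp : ℝ → Eu n)
    (hy : ∀ t, HasDerivAt y (mulA A (y t) + g (x t) (y t)) t)
    (hypB : ∃ B, ∀ t, ‖yp t‖ ≤ B)
    (hyp : ∀ t, HasDerivAt yp (mulA A (yp t) + g (xp t) (yp t)) t) :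
    (∀ t ∈ Icc a (a + E), ‖y t - yp t‖ <
      N * ‖y a - yp a‖ * Real.exp ((N * L₃ - ω) * (t - a)) +
        N * L₂ * ε / (ω - N * L₃)) ∧
    ((1 / (ω - N * L₃)) * Real.log (N * ‖y a - yp a‖ / ε) < E →
      ∃ b ∈ Icc a (a + E), ∀ t ∈ Icc b (a + E),
        ‖y t - yp t‖ < (1 + N * L₂ / (ω - N * L₃)) * ε) := by
  -- notation
  set K : ℝ := N * L₃ with hKdef
  have hK : 0 < K := mul_pos hN hL₃
  have hωK : 0 < ω - K := by linarith
  set v : ℝ → Eu n := fun t => y t - yp t with hvdef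
  set G : ℝ → Eu n := fun t => g (x t) (y t) - g (xp t) (yp t) with hGdef
  set α : ℝ := N * ‖v a‖ with hαdef
  set β : ℝ := N * L₂ * ε with hβdef
  have hα : 0 ≤ α := mul_nonneg hN.le (norm_nonneg _)
  have hβ : 0 < β := mul_pos (mul_pos hN hL₂) hε
  -- continuity facts
  have hyc : Continuous y := continuous_iff_continuousAt.2 fun t => (hy t).continuousAt
  have hypc : Continuous yp := continuous_iff_continuousAt.2 fun t => (hyp t).continuousAt
  have hxc : Continuous x := continuous_iff_continuousAt.2 fun t => (hx t).continuousAt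
  have hxpc : Continuous xp := continuous_iff_continuousAt.2 fun t => (hxp t).continuousAt
  have hvc : Continuous v := hyc.sub hypc
  have hGc : Continuous G :=
    (hgc.comp (hxc.prodMk hyc)).sub (hgc.comp (hxpc.prodMk hypc))
  -- derivative of v
  have hv' : ∀ t, HasDerivAt v (mulA A (v t) + G t) t := by
    intro t
    have := (hy t).sub (hyp t)
    have heq : mulA A (y t) + g (x t) (y t) - (mulA A (yp t) + g (xp t) (yp t))
        = mulA A (v t) + G t := by
      simp only [hvdef, hGdef, (mulA A).map_sub]
      abel
    rwa [heq] at this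
  -- bound on G
  have hGb : ∀ s ∈ Icc a (a + E), ‖G s‖ ≤ L₂ * ε + L₃ * ‖v s‖ := by
    intro s hs
    have h1 : ‖G s‖ ≤ ‖g (x s) (y s) - g (xp s) (y s)‖ + ‖g (xp s) (y s) - g (xp s) (yp s)‖ := by
      simpa [hGdef] using norm_sub_le_norm_sub_add_norm_sub
        (g (x s) (y s)) (g (xp s) (y s)) (g (xp s) (yp s))
    have h2 : ‖g (x s) (y s) - g (xp s) (y s)‖ ≤ L₂ * ε :=
      (hg₂ _ _ _).trans (by
        have := (hclose s hs).le
        nlinarith [norm_nonneg (x s - xp s)])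
    have h3 : ‖g (xp s) (y s) - g (xp s) (yp s)‖ ≤ L₃ * ‖v s‖ := hg₃ _ _ _
    linarith
  -- the semigroup
  set P : ℝ → (Eu n →L[ℝ] Eu n) := fun τ => NormedSpace.exp (τ • mulA A) with hPdef
  have hP : ∀ τ, HasDerivAt P (P τ * mulA A) τ := fun τ =>
    hasDerivAt_exp_smul_const (𝕂 := ℝ) (mulA A) τ
  have hPc : Continuous P := continuous_iff_continuousAt.2 fun τ => (hP τ).continuousAt
  have hPn : ∀ τ : ℝ, 0 ≤ τ → ‖P τ‖ ≤ N * Real.exp (-ω * τ) := by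
    intro τ hτ
    have := hA τ hτ
    rwa [eAt_eq] at this
  have hP0 : P 0 = 1 := by
    simp only [hPdef]
    rw [zero_smul ℝ (mulA A)]
    exact NormedSpace.exp_zero (𝔸 := Eu n →L[ℝ] Eu n)
  -- variation of constants
  have hvoc : ∀ T : ℝ, v T = P (T - a) (v a) + ∫ s in a..T, P (T - s) (G s) := by
    intro T
    have hfder : ∀ s ∈ uIcc a T,
        HasDerivAt (fun s => P (T - s) (v s)) (P (T - s) (G s)) s := by
      intro s _
      have hinner : HasDerivAt (fun s : ℝ => T - s) (-1) s := by
        simpa using (hasDerivAt_id s).const_sub T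
      have hc : HasDerivAt (fun s => P (T - s)) ((-1 : ℝ) • (P (T - s) * mulA A)) s :=
        (hP (T - s)).scomp s hinner
      have := hc.clm_apply (hv' s)
      have heq : ((-1 : ℝ) • (P (T - s) * mulA A)) (v s) + P (T - s) (mulA A (v s) + G s)
          = P (T - s) (G s) := by
        simp [ContinuousLinearMap.mul_apply]
      rwa [heq] at this
    have hic : Continuous fun s => P (T - s) (G s) :=
      (hPc.comp (continuous_const.sub continuous_id)).clm_apply hGc
    have := intervalIntegral.integral_eq_sub_of_hasDerivAt hfder (hic.intervalIntegrable a T)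
    have hTT : P (T - T) (v T) = v T := by
      rw [sub_self, hP0, ContinuousLinearMap.one_apply]
    rw [hTT] at this
    rw [this]
    abel
  -- the fundamental integral inequality
  set W : ℝ → ℝ := fun s => Real.exp (ω * (s - a)) * ‖v s‖ with hWdef
  have hcont1 : Continuous fun s : ℝ => Real.exp (ω * (s - a)) :=
    Real.continuous_exp.comp (continuous_const.mul (continuous_id.sub continuous_const))
  have hWc : Continuous W := hcont1.mul hvc.norm
  set φ : ℝ → ℝ := fun T => ∫ s in a..T, W s with hφdef
  set C : ℝ → ℝ := fun T => α + β * (Real.exp (ω * (T - a)) - 1) / ω with hCdef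
  have hbound : ∀ T ∈ Icc a (a + E), W T ≤ C T + K * φ T := by
    intro T hT
    obtain ⟨haT, hTE⟩ := hT
    -- step 1 : pointwise norm estimate
    have step1 : ‖v T‖ ≤ N * Real.exp (-ω * (T - a)) * ‖v a‖ +
        ∫ s in a..T, N * Real.exp (-ω * (T - s)) * (L₂ * ε + L₃ * ‖v s‖) := by
      rw [hvoc T]
      refine (norm_add_le _ _).trans (add_le_add ?_ ?_)
      · calc ‖P (T - a) (v a)‖ ≤ ‖P (T - a)‖ * ‖v a‖ := (P (T - a)).le_opNorm _
          _ ≤ N * Real.exp (-ω * (T - a)) * ‖v a‖ :=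
            mul_le_mul_of_nonneg_right (hPn _ (by linarith)) (norm_nonneg _)
      · refine (intervalIntegral.norm_integral_le_integral_norm haT).trans ?_
        refine intervalIntegral.integral_mono_on haT ?_ ?_ ?_
        · exact ((hPc.comp (continuous_const.sub continuous_id)).clm_apply hGc).norm.intervalIntegrable _ _
        · have hc2 : Continuous fun s : ℝ => Real.exp (-ω * (T - s)) :=
            Real.continuous_exp.comp (continuous_const.mul (continuous_const.sub continuous_id))
          exact ((continuous_const.mul hc2).mul
            (continuous_const.add (continuous_const.mul hvc.norm))).intervalIntegrable _ _
        · intro s hs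
          obtain ⟨has, hsT⟩ := hs
          calc ‖P (T - s) (G s)‖ ≤ ‖P (T - s)‖ * ‖G s‖ := (P (T - s)).le_opNorm _
            _ ≤ (N * Real.exp (-ω * (T - s))) * (L₂ * ε + L₃ * ‖v s‖) := by
                refine mul_le_mul (hPn _ (by linarith)) (hGb s ⟨has, by linarith⟩)
                  (norm_nonneg _) ?_
                positivity
    -- multiply by the exponential and rewrite the integral
    have hmul : Real.exp (ω * (T - a)) *
        (∫ s in a..T, N * Real.exp (-ω * (T - s)) * (L₂ * ε + L₃ * ‖v s‖)) =
        ∫ s in a..T, N * Real.exp (ω * (s - a)) * (L₂ * ε + L₃ * ‖v s‖) := by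
      rw [← intervalIntegral.integral_const_mul]
      refine intervalIntegral.integral_congr fun s _ => ?_
      rw [show Real.exp (ω * (T - a)) * (N * Real.exp (-ω * (T - s)) * (L₂ * ε + L₃ * ‖v s‖))
          = N * (Real.exp (ω * (T - a)) * Real.exp (-ω * (T - s))) * (L₂ * ε + L₃ * ‖v s‖) by ring,
        ← Real.exp_add]
      ring_nf
    have hsplit : (∫ s in a..T, N * Real.exp (ω * (s - a)) * (L₂ * ε + L₃ * ‖v s‖)) =
        β * ((Real.exp (ω * (T - a)) - 1) / ω) + K * φ T := by
      have hint1 : IntervalIntegrable (fun s => N * L₂ * ε * Real.exp (ω * (s - a)))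
          volume a T :=
        (continuous_const.mul hcont1).intervalIntegrable _ _
      have hint2 : IntervalIntegrable (fun s => K * W s) volume a T :=
        (continuous_const.mul hWc).intervalIntegrable _ _
      have heq : ∀ s, N * Real.exp (ω * (s - a)) * (L₂ * ε + L₃ * ‖v s‖)
          = N * L₂ * ε * Real.exp (ω * (s - a)) + K * W s := by
        intro s; simp only [hWdef, hKdef]; ring
      rw [intervalIntegral.integral_congr (g := fun s =>
          N * L₂ * ε * Real.exp (ω * (s - a)) + K * W s) (fun s _ => heq s),
        intervalIntegral.integral_add hint1 hint2,
        intervalIntegral.integral_const_mul, intervalIntegral.integral_const_mul]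
      have hexpint : (∫ s in a..T, Real.exp (ω * (s - a)))
          = (Real.exp (ω * (T - a)) - 1) / ω := by
        have : ∀ s ∈ uIcc a T, HasDerivAt (fun u => Real.exp (ω * (u - a)) / ω)
            (Real.exp (ω * (s - a))) s := by
          intro s _
          have := (exp_comp_hasDerivAt ω a s).div_const ω
          simpa [mul_comm, mul_div_assoc, mul_div_cancel_left₀ _ hω.ne'] using this
        have := intervalIntegral.integral_eq_sub_of_hasDerivAt this
          (hcont1.intervalIntegrable _ _)
        rw [this]
        simp [sub_div]
      rw [hexpint, hβdef, hφdef]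
    -- put it together
    have hE1 : Real.exp (ω * (T - a)) * (N * Real.exp (-ω * (T - a)) * ‖v a‖) = α := by
      rw [show Real.exp (ω * (T - a)) * (N * Real.exp (-ω * (T - a)) * ‖v a‖)
          = N * (Real.exp (ω * (T - a)) * Real.exp (-ω * (T - a))) * ‖v a‖ by ring,
        ← Real.exp_add]
      simp [hαdef]
    have hexp_pos : (0:ℝ) < Real.exp (ω * (T - a)) := Real.exp_pos _
    have := mul_le_mul_of_nonneg_left step1 hexp_pos.le
    rw [mul_add, hmul, hsplit, hE1] at this
    simp only [hWdef, hCdef, mul_div_assoc]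
    linarith
  -- derivative of φ
  have hφ' : ∀ T, HasDerivAt φ (W T) T := by
    intro T
    exact intervalIntegral.integral_hasDerivAt_right (hWc.intervalIntegrable _ _)
      (hWc.stronglyMeasurableAtFilter _ _) hWc.continuousAt
  -- the comparison function ψ
  set ψ : ℝ → ℝ := fun T => (α * Real.exp (K * (T - a)) +
      β * (Real.exp (ω * (T - a)) - Real.exp (K * (T - a))) / (ω - K) - C T) / K with hψdef
  have hψ' : ∀ T, HasDerivAt ψ (K * ψ T + C T) T := by
    intro T
    have h1 := exp_comp_hasDerivAt K a T
    have h2 := exp_comp_hasDerivAt ω a T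
    have hC : HasDerivAt C (β * Real.exp (ω * (T - a))) T := by
      have := ((h2.sub_const 1).const_mul β).div_const ω
      have h3 : HasDerivAt (fun T => α + β * (Real.exp (ω * (T - a)) - 1) / ω)
          (β * (ω * Real.exp (ω * (T - a))) / ω) T := this.const_add α
      have heq : β * (ω * Real.exp (ω * (T - a))) / ω = β * Real.exp (ω * (T - a)) := by
        field_simp
      rw [heq] at h3
      exact h3
    have hD : HasDerivAt ψ ((α * (K * Real.exp (K * (T - a))) +
        β * (ω * Real.exp (ω * (T - a)) - K * Real.exp (K * (T - a))) / (ω - K) -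
        β * Real.exp (ω * (T - a))) / K) T := by
      exact (((h1.const_mul α).add (((h2.sub h1).const_mul β).div_const (ω - K))).sub hC).div_const K
    have heq : (α * (K * Real.exp (K * (T - a))) +
        β * (ω * Real.exp (ω * (T - a)) - K * Real.exp (K * (T - a))) / (ω - K) -
        β * Real.exp (ω * (T - a))) / K = K * ψ T + C T := by
      simp only [hψdef, hCdef]
      field_simp
      ring
    rwa [heq] at hD
  -- Gronwall comparison : φ ≤ ψ on Icc a (a+E)
  have hφψ : ∀ T ∈ Icc a (a + E), φ T ≤ ψ T := by
    intro T hT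
    set h : ℝ → ℝ := fun T => Real.exp (-(K * (T - a))) * (φ T - ψ T) with hhdef
    have hh' : ∀ T, HasDerivAt h
        (-K * Real.exp (-(K * (T - a))) * (φ T - ψ T) +
          Real.exp (-(K * (T - a))) * (W T - (K * ψ T + C T))) T := by
      intro T
      have he : HasDerivAt (fun T => Real.exp (-(K * (T - a))))
          (-K * Real.exp (-(K * (T - a)))) T := by
        have := exp_comp_hasDerivAt (-K) a T
        simpa [neg_mul] using this
      have := he.mul ((hφ' T).sub (hψ' T))
      exact this
    have hanti : AntitoneOn h (Icc a (a + E)) := by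
      refine antitoneOn_of_deriv_nonpos (convex_Icc a (a + E)) ?_ ?_ ?_
      · exact Continuous.continuousOn (continuous_iff_continuousAt.2
          fun t => (hh' t).continuousAt)
      · intro t ht
        exact (hh' t).differentiableAt.differentiableWithinAt
      · intro t ht
        rw [interior_Icc] at ht
        rw [(hh' t).deriv]
        have hWb := hbound t ⟨ht.1.le, ht.2.le⟩
        have hext : (0:ℝ) < Real.exp (-(K * (t - a))) := Real.exp_pos _
        have : -K * Real.exp (-(K * (t - a))) * (φ t - ψ t) +
            Real.exp (-(K * (t - a))) * (W t - (K * ψ t + C t))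
            = Real.exp (-(K * (t - a))) * (W t - (C t + K * φ t)) := by ring
        rw [this]
        have : W t - (C t + K * φ t) ≤ 0 := by linarith
        exact mul_nonpos_of_nonneg_of_nonpos hext.le this
    have hψa : ψ a = 0 := by
      simp [hψdef, hCdef]
    have hφa : φ a = 0 := by
      simp [hφdef]
    have hha : h a = 0 := by simp [hhdef, hψa, hφa]
    have := hanti (left_mem_Icc.2 (by linarith)) hT hT.1
    rw [hha] at this
    have hext : (0:ℝ) < Real.exp (-(K * (T - a))) := Real.exp_pos _
    simp only [hhdef] at this
    by_contra hcon
    push_neg at hcon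
    have hpos : 0 < Real.exp (-(K * (T - a))) * (φ T - ψ T) :=
      mul_pos hext (by linarith)
    linarith
  -- the key estimate
  have key : ∀ T ∈ Icc a (a + E), ‖v T‖ ≤
      α * Real.exp ((K - ω) * (T - a)) +
        β * (1 - Real.exp ((K - ω) * (T - a))) / (ω - K) := by
    intro T hT
    have h1 : W T ≤ C T + K * ψ T := by
      have := hbound T hT
      have h2 := hφψ T hT
      nlinarith
    have h3 : C T + K * ψ T = α * Real.exp (K * (T - a)) +
        β * (Real.exp (ω * (T - a)) - Real.exp (K * (T - a))) / (ω - K) := by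
      simp only [hψdef]
      field_simp
      ring
    rw [h3] at h1
    have hexp_pos : (0:ℝ) < Real.exp (ω * (T - a)) := Real.exp_pos _
    rw [show (K - ω) * (T - a) = K * (T - a) - ω * (T - a) by ring, Real.exp_sub]
    rw [div_eq_mul_inv, ← Real.exp_neg]
    have : ‖v T‖ = W T * Real.exp (-(ω * (T - a))) := by
      simp only [hWdef]
      rw [mul_comm (Real.exp _) _, mul_assoc, ← Real.exp_add]
      simp
    rw [this]
    have hrhs : (α * Real.exp (K * (T - a)) +
        β * (Real.exp (ω * (T - a)) - Real.exp (K * (T - a))) / (ω - K)) *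
          Real.exp (-(ω * (T - a)))
        = α * (Real.exp (K * (T - a)) * Real.exp (-(ω * (T - a)))) +
          β * (1 - Real.exp (K * (T - a)) * Real.exp (-(ω * (T - a)))) / (ω - K) := by
      have he : Real.exp (ω * (T - a)) * Real.exp (-(ω * (T - a))) = 1 := by
        rw [← Real.exp_add]; simp
      field_simp
      rw [mul_comm (T - a) ω]
      linear_combination β * he
    calc W T * Real.exp (-(ω * (T - a)))
        ≤ (α * Real.exp (K * (T - a)) +
            β * (Real.exp (ω * (T - a)) - Real.exp (K * (T - a))) / (ω - K)) *
            Real.exp (-(ω * (T - a))) :=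
          mul_le_mul_of_nonneg_right h1 (Real.exp_pos _).le
      _ = _ := hrhs
  -- part 1
  have part1 : ∀ t ∈ Icc a (a + E), ‖y t - yp t‖ <
      N * ‖y a - yp a‖ * Real.exp ((N * L₃ - ω) * (t - a)) +
        N * L₂ * ε / (ω - N * L₃) := by
    intro t ht
    have h1 := key t ht
    have hlt : β * (1 - Real.exp ((K - ω) * (t - a))) / (ω - K) < β / (ω - K) := by
      rw [div_lt_div_iff₀ hωK hωK]
      nlinarith [Real.exp_pos ((K - ω) * (t - a)),
        mul_pos (mul_pos hβ (Real.exp_pos ((K - ω) * (t - a)))) hωK]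
    have h2 : ‖v t‖ < α * Real.exp ((K - ω) * (t - a)) + β / (ω - K) := by linarith
    simpa only [hvdef, hαdef, hβdef, hKdef] using h2
  refine ⟨part1, fun hElog => ?_⟩
  -- part 2
  set δ : ℝ := ‖y a - yp a‖ with hδdef
  have hδ0 : 0 ≤ δ := norm_nonneg _
  set r : ℝ := max 0 ((1 / (ω - K)) * Real.log (N * δ / ε)) with hrdef
  have hr0 : 0 ≤ r := le_max_left _ _
  have hrE : r ≤ E := max_le hE.le (by
    simpa only [hKdef] using hElog.le)
  refine ⟨a + r, ⟨by linarith, by linarith⟩, ?_⟩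
  intro t ht
  obtain ⟨hbt, htE⟩ := ht
  have htIcc : t ∈ Icc a (a + E) := ⟨by linarith, htE⟩
  have hmain := part1 t htIcc
  -- show the transient term is at most ε
  have hterm : N * δ * Real.exp ((N * L₃ - ω) * (t - a)) ≤ ε := by
    rcases eq_or_lt_of_le hδ0 with hδ0' | hδpos
    · rw [← hδ0']
      simpa using hε.le
    · have hNδ : 0 < N * δ := mul_pos hN hδpos
      have hlogle : (1 / (ω - K)) * Real.log (N * δ / ε) ≤ r := le_max_right _ _
      have hta : Real.log (N * δ / ε) ≤ (ω - K) * (t - a) := by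
        have h1 : (1 / (ω - K)) * Real.log (N * δ / ε) ≤ t - a := by linarith
        calc Real.log (N * δ / ε) = (ω - K) * ((1 / (ω - K)) * Real.log (N * δ / ε)) := by
              field_simp
          _ ≤ (ω - K) * (t - a) := by
              exact mul_le_mul_of_nonneg_left h1 hωK.le
      have hexple : Real.exp ((N * L₃ - ω) * (t - a)) ≤ ε / (N * δ) := by
        rw [show (N * L₃ - ω) * (t - a) = -((ω - K) * (t - a)) by rw [hKdef]; ring]
        calc Real.exp (-((ω - K) * (t - a))) ≤ Real.exp (-(Real.log (N * δ / ε))) := by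
              apply Real.exp_le_exp.2
              linarith
          _ = ε / (N * δ) := by
              rw [Real.exp_neg, Real.exp_log (by positivity), inv_div]
      calc N * δ * Real.exp ((N * L₃ - ω) * (t - a)) ≤ N * δ * (ε / (N * δ)) :=
            mul_le_mul_of_nonneg_left hexple hNδ.le
        _ = ε := by field_simp
  have hfin : N * L₂ * ε / (ω - N * L₃) + ε = (1 + N * L₂ / (ω - N * L₃)) * ε := by
    field_simp
    ring
  have := hmain
  rw [hδdef] at hterm
  linarith
end
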